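/- Equivalent execution sequences assign equal cost to every plan: if σ ∼ σ' are equivalent execution sequences of a constrained compositional workflow schema, then for every plan π : S(σ) → U, the total weight of π with respect to σ equals the total weight of π with respect to σ', i.e., w_σ(π) = w_{σ'}(π). -/

import Mathlib

open scoped Classical

variable {α U : Type*}

/-- The set of release points occurring strictly after `s` in `σ`. -/
def afterRels [DecidableEq α] (isRel : α → Bool) (σ : List α) (s : α) : Finset α :=
  ((σ.drop (σ.idxOf s + 1)).filter isRel).toFinset

/-- Equivalence of execution sequences. -/
def Sim [DecidableEq α] (isRel : α → Bool) (σ σ' : List α) : Prop :=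
  σ.filter isRel = σ'.filter isRel ∧
  (σ.filter (fun x => !isRel x)).toFinset = (σ'.filter (fun x => !isRel x)).toFinset ∧
  ∀ s ∈ σ, isRel s = false → afterRels isRel σ s = afterRels isRel σ' s

/-- The set of steps of a sequence. -/
def stepSet [DecidableEq α] (isRel : α → Bool) (l : List α) : Finset α :=
  (l.filter (fun x => !isRel x)).toFinset

/-- A constraint with release points: scope `T`, authorized assignments `Θ`
(given as total functions, only their values on the relevant steps matter),
and release points `P`. -/
structure RConstraint (α U : Type*) where
  T : Finset α
  Θ : Set (α → U)
  P : Finset α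

/-- A plan `π` satisfies a constraint `c` in the execution sequence `σ` iff its
restriction to each subscope (the part of the scope between consecutive release
points of `c` occurring in `σ`) extends to an authorized assignment. -/
def SatisfiesIn [DecidableEq α] (isRel : α → Bool) (c : RConstraint α U)
    (σ : List α) (π : α → U) : Prop :=
  ∀ seg ∈ σ.splitOnP (fun x => isRel x && decide (x ∈ c.P)),
    ∃ f ∈ c.Θ, ∀ s ∈ c.T ∩ stepSet isRel seg, f s = π s

open List

section Aux

theorem aux_splitOnP_length (p : α → Bool) (l : List α) :
    (l.splitOnP p).length = l.countP p + 1 := by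
  induction l with
  | nil => simp
  | cons a l ih =>
    by_cases h : p a <;> simp [splitOnP_cons, h, ih, countP_cons]

theorem aux_mem_of_mem_splitOnP (p : α → Bool) {l seg : List α}
    (hseg : seg ∈ l.splitOnP p) {x : α} (hx : x ∈ seg) : x ∈ l := by
  induction l generalizing seg with
  | nil => simp_all
  | cons a l ih =>
    by_cases h : p a
    · simp only [splitOnP_cons, if_pos h, mem_cons] at hseg
      rcases hseg with rfl | hseg
      · simp at hx
      · exact mem_cons_of_mem _ (ih hseg hx)
    · obtain ⟨b, bs, hb⟩ : ∃ b bs, l.splitOnP p = b :: bs := by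
        rcases h' : l.splitOnP p with _ | ⟨b, bs⟩
        · exact absurd h' (splitOnP_ne_nil _ _)
        · exact ⟨b, bs, rfl⟩
      simp only [splitOnP_cons, if_neg h, hb, modifyHead_cons, mem_cons] at hseg
      rcases hseg with rfl | hseg
      · rcases mem_cons.mp hx with rfl | hx
        · exact mem_cons_self
        · exact mem_cons_of_mem _ (ih (hb ▸ mem_cons_self) hx)
      · exact mem_cons_of_mem _ (ih (hb ▸ mem_cons_of_mem _ hseg) hx)

theorem aux_mem_splitOnP_getElem [DecidableEq α] (p : α → Bool) {l : List α} (hl : l.Nodup)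
    {s : α} (hs : p s = false) (i : ℕ) (hi : i < (l.splitOnP p).length) :
    s ∈ (l.splitOnP p)[i] ↔ s ∈ l ∧ (l.take (l.idxOf s)).countP p = i := by
  induction l generalizing i with
  | nil =>
    obtain rfl : i = 0 := by
      simp only [splitOnP_nil, length_cons, length_nil] at hi; omega
    simp
  | cons a l ih =>
    have hnd : l.Nodup := hl.of_cons
    have hal : a ∉ l := (nodup_cons.mp hl).1
    by_cases h : p a
    · have hsa : s ≠ a := fun e => by rw [e, h] at hs; simp at hs
      have hidx : (a :: l).idxOf s = l.idxOf s + 1 := idxOf_cons_ne _ (Ne.symm hsa)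
      have hcnt : ((a :: l).take ((a :: l).idxOf s)).countP p
          = (l.take (l.idxOf s)).countP p + 1 := by
        rw [hidx, take_succ_cons, countP_cons_of_pos h]
      rcases i with _ | i
      · simp only [splitOnP_cons, if_pos h]
        constructor
        · intro hx; simp at hx
        · rintro ⟨hmem, hcount⟩
          rw [hcnt] at hcount
          omega
      · have hi' : i < (l.splitOnP p).length := by
          simp only [splitOnP_cons, if_pos h, length_cons] at hi; omega
        have heq : ((a :: l).splitOnP p)[i + 1]'hi = (l.splitOnP p)[i]'hi' := by
          simp [splitOnP_cons, if_pos h]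
        rw [heq, ih hnd _ hi', hcnt, mem_cons]
        constructor
        · rintro ⟨h1, h2⟩; exact ⟨Or.inr h1, by omega⟩
        · rintro ⟨h1 | h1, h2⟩
          · exact absurd h1 hsa
          · exact ⟨h1, by omega⟩
    · obtain ⟨b, bs, hb⟩ : ∃ b bs, l.splitOnP p = b :: bs := by
        rcases h' : l.splitOnP p with _ | ⟨b, bs⟩
        · exact absurd h' (splitOnP_ne_nil _ _)
        · exact ⟨b, bs, rfl⟩
      have hsplit : (a :: l).splitOnP p = (a :: b) :: bs := by
        simp [splitOnP_cons, if_neg h, hb]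
      by_cases hsa : s = a
      · have hidx : (a :: l).idxOf s = 0 := by rw [hsa]; exact idxOf_cons_self
        rcases i with _ | i
        · have h0 : ((a :: l).splitOnP p)[0]'hi = a :: b := by simp only [hsplit]; rfl
          rw [h0, hidx]
          simp [hsa]
        · have hibs : i < bs.length := by rw [hsplit] at hi; simpa using hi
          have heq : ((a :: l).splitOnP p)[i + 1]'hi = bs[i]'hibs := by
            simp only [hsplit]; simp
          rw [heq, hidx]
          constructor
          · intro hx
            exact absurd (hsa ▸ aux_mem_of_mem_splitOnP p
              (by rw [hb]; exact mem_cons_of_mem _ (getElem_mem _)) hx) hal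
          · rintro ⟨-, hc⟩; simp at hc
      · have hidx : (a :: l).idxOf s = l.idxOf s + 1 := idxOf_cons_ne _ (Ne.symm hsa)
        have hcnt : ((a :: l).take ((a :: l).idxOf s)).countP p
            = (l.take (l.idxOf s)).countP p := by
          rw [hidx, take_succ_cons, countP_cons_of_neg h]
        have hmem : s ∈ a :: l ↔ s ∈ l := by simp [hsa]
        rcases i with _ | i
        · have h0 : ((a :: l).splitOnP p)[0]'hi = a :: b := by simp only [hsplit]; rfl
          have hb0 : (l.splitOnP p)[0]'(by rw [hb]; simp) = b := by simp only [hb]; rfl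
          have := ih hnd 0 (by rw [hb]; simp)
          rw [hb0] at this
          rw [h0, mem_cons, hcnt, hmem, ← this]
          simp [hsa]
        · have hi' : i + 1 < (l.splitOnP p).length := by
            rw [hsplit] at hi; rw [hb]; simpa using hi
          have heq : ((a :: l).splitOnP p)[i + 1]'hi = (l.splitOnP p)[i + 1]'hi' := by
            simp only [hsplit, hb]; simp
          rw [heq, ih hnd _ hi', hcnt, hmem]

/-- count of `p`-elements strictly after `s`, expressed via `afterRels`. -/
theorem aux_countP_drop_eq [DecidableEq α] (isRel : α → Bool) (P : Finset α) (σ : List α)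
    (hσ : σ.Nodup) (s : α) :
    (σ.drop (σ.idxOf s + 1)).countP (fun x => isRel x && decide (x ∈ P)) =
      ((afterRels isRel σ s).filter (· ∈ P)).card := by
  set d := σ.drop (σ.idxOf s + 1) with hd
  have hdnd : d.Nodup := ((drop_sublist _ _).nodup hσ)
  have h1 : d.countP (fun x => isRel x && decide (x ∈ P)) =
      ((d.filter isRel).filter (fun x => decide (x ∈ P))).length := by
    rw [← countP_eq_length_filter, countP_filter]
    congr 1; funext x; rw [Bool.and_comm]
  rw [h1, ← List.toFinset_card_of_nodup ((hdnd.filter _).filter _), List.toFinset_filter]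
  simp [afterRels, hd]

/-- take + self + drop counting identity. -/
theorem aux_countP_take_add [DecidableEq α] (p : α → Bool) {σ : List α} {s : α}
    (hmem : s ∈ σ) (hs : p s = false) :
    (σ.take (σ.idxOf s)).countP p + (σ.drop (σ.idxOf s + 1)).countP p = σ.countP p := by
  have hlt : σ.idxOf s < σ.length := idxOf_lt_length_iff.mpr hmem
  conv_rhs => rw [← take_append_drop (σ.idxOf s) σ]
  rw [drop_eq_getElem_cons hlt, getElem_idxOf hlt, countP_append,
    countP_cons_of_neg (by simp [hs])]

theorem aux_countP_total [DecidableEq α] (isRel : α → Bool) (P : Finset α) {σ σ' : List α}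
    (h : σ.filter isRel = σ'.filter isRel) :
    σ.countP (fun x => isRel x && decide (x ∈ P)) =
      σ'.countP (fun x => isRel x && decide (x ∈ P)) := by
  have key : ∀ l : List α, l.countP (fun x => isRel x && decide (x ∈ P)) =
      (l.filter isRel).countP (fun x => decide (x ∈ P)) := by
    intro l
    rw [countP_filter]
    congr 1; funext x; rw [Bool.and_comm]
  rw [key, key, h]

theorem aux_mem_stepSet [DecidableEq α] (isRel : α → Bool) (l : List α) (s : α) :
    s ∈ stepSet isRel l ↔ s ∈ l ∧ isRel s = false := by
  simp [stepSet, List.mem_filter]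

theorem Sim.symm' [DecidableEq α] {isRel : α → Bool} {σ σ' : List α}
    (h : Sim isRel σ σ') : Sim isRel σ' σ := by
  obtain ⟨h1, h2, h3⟩ := h
  refine ⟨h1.symm, h2.symm, fun s hs hrel => ?_⟩
  have hsσ : s ∈ σ := by
    have : s ∈ stepSet isRel σ' := (aux_mem_stepSet _ _ _).mpr ⟨hs, hrel⟩
    have : s ∈ stepSet isRel σ := by rwa [show stepSet isRel σ = stepSet isRel σ' from h2]
    exact ((aux_mem_stepSet _ _ _).mp this).1
  exact (h3 s hsσ hrel).symm

/-- The subscope step sets of equivalent sequences coincide. -/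
theorem aux_stepSet_eq [DecidableEq α] (isRel : α → Bool) (P : Finset α) {σ σ' : List α}
    (hσ : σ.Nodup) (hσ' : σ'.Nodup) (hsim : Sim isRel σ σ') (i : ℕ)
    (hi : i < (σ.splitOnP (fun x => isRel x && decide (x ∈ P))).length)
    (hi' : i < (σ'.splitOnP (fun x => isRel x && decide (x ∈ P))).length) :
    stepSet isRel ((σ.splitOnP (fun x => isRel x && decide (x ∈ P)))[i]) =
      stepSet isRel ((σ'.splitOnP (fun x => isRel x && decide (x ∈ P)))[i]) := by
  obtain ⟨h1, h2, h3⟩ := hsim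
  set p := fun x => isRel x && decide (x ∈ P) with hp
  ext s
  rw [aux_mem_stepSet, aux_mem_stepSet]
  by_cases hrel : isRel s = false
  · have hps : p s = false := by simp [hp, hrel]
    rw [aux_mem_splitOnP_getElem p hσ hps i hi, aux_mem_splitOnP_getElem p hσ' hps i hi']
    have hmem : s ∈ σ ↔ s ∈ σ' := by
      constructor <;> intro h
      · have : s ∈ stepSet isRel σ' := by
          rw [show stepSet isRel σ' = stepSet isRel σ from h2.symm]
          exact (aux_mem_stepSet _ _ _).mpr ⟨h, hrel⟩
        exact ((aux_mem_stepSet _ _ _).mp this).1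
      · have : s ∈ stepSet isRel σ := by
          rw [show stepSet isRel σ = stepSet isRel σ' from h2]
          exact (aux_mem_stepSet _ _ _).mpr ⟨h, hrel⟩
        exact ((aux_mem_stepSet _ _ _).mp this).1
    constructor
    · rintro ⟨⟨hsσ, hc⟩, -⟩
      have hsσ' : s ∈ σ' := hmem.mp hsσ
      refine ⟨⟨hsσ', ?_⟩, hrel⟩
      have e1 := aux_countP_take_add p hsσ hps
      have e2 := aux_countP_take_add p hsσ' hps
      have e3 : σ.countP p = σ'.countP p := aux_countP_total isRel P h1
      have e4 : (σ.drop (σ.idxOf s + 1)).countP p = (σ'.drop (σ'.idxOf s + 1)).countP p := by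
        rw [hp, aux_countP_drop_eq isRel P σ hσ s, aux_countP_drop_eq isRel P σ' hσ' s,
          h3 s hsσ hrel]
      omega
    · rintro ⟨⟨hsσ', hc⟩, -⟩
      have hsσ : s ∈ σ := hmem.mpr hsσ'
      refine ⟨⟨hsσ, ?_⟩, hrel⟩
      have e1 := aux_countP_take_add p hsσ hps
      have e2 := aux_countP_take_add p hsσ' hps
      have e3 : σ.countP p = σ'.countP p := aux_countP_total isRel P h1
      have e4 : (σ.drop (σ.idxOf s + 1)).countP p = (σ'.drop (σ'.idxOf s + 1)).countP p := by
        rw [hp, aux_countP_drop_eq isRel P σ hσ s, aux_countP_drop_eq isRel P σ' hσ' s,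
          h3 s hsσ hrel]
      omega
  · simp only [Bool.not_eq_false] at hrel
    simp [hrel]

theorem aux_satisfiesIn_of_sim [DecidableEq α] (isRel : α → Bool) (c : RConstraint α U)
    {σ σ' : List α} (hσ : σ.Nodup) (hσ' : σ'.Nodup) (hsim : Sim isRel σ σ') (π : α → U)
    (h : SatisfiesIn isRel c σ' π) : SatisfiesIn isRel c σ π := by
  intro seg hseg
  set p := fun x => isRel x && decide (x ∈ c.P) with hp
  obtain ⟨i, hi, rfl⟩ := List.mem_iff_getElem.mp hseg
  have hlen : (σ.splitOnP p).length = (σ'.splitOnP p).length := by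
    rw [aux_splitOnP_length, aux_splitOnP_length, aux_countP_total isRel c.P hsim.1]
  have hi' : i < (σ'.splitOnP p).length := hlen ▸ hi
  obtain ⟨f, hf, hf2⟩ := h ((σ'.splitOnP p)[i]) (getElem_mem hi')
  refine ⟨f, hf, fun s hs => hf2 s ?_⟩
  rwa [← aux_stepSet_eq isRel c.P hσ hσ' hsim i hi hi']

end Aux

/-- Equivalent execution sequences assign equal total cost to every plan. -/
theorem sim_weight_eq [DecidableEq α] (isRel : α → Bool)
    (C : List (RConstraint α U)) (wA : (α → U) → ℝ) (wC : RConstraint α U → ℝ)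
    (hwC : ∀ c ∈ C, 0 < wC c)
    (σ σ' : List α) (hσ : σ.Nodup) (hσ' : σ'.Nodup)
    (hsim : Sim isRel σ σ') (π : α → U) :
    wA π + (C.map (fun c => if SatisfiesIn isRel c σ π then 0 else wC c)).sum =
    wA π + (C.map (fun c => if SatisfiesIn isRel c σ' π then 0 else wC c)).sum := by
  have key : ∀ c : RConstraint α U, SatisfiesIn isRel c σ π ↔ SatisfiesIn isRel c σ' π :=
    fun c => ⟨fun h => aux_satisfiesIn_of_sim isRel c hσ' hσ hsim.symm' π h,
      fun h => aux_satisfiesIn_of_sim isRel c hσ hσ' hsim π h⟩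
  congr 1
  refine congrArg List.sum (List.map_congr_left fun c _ => ?_)
  by_cases h : SatisfiesIn isRel c σ π
  · rw [if_pos h, if_pos ((key c).mp h)]
  · rw [if_neg h, if_neg (fun h' => h ((key c).mpr h'))]
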